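/- Let R be an associative real algebra with identity, equipped with an involution γ (an ℝ-linear anti-automorphism with γ∘γ = id) such that γ(a)·a = a·γ(a) ∈ ℝ·1 for all a ∈ R. Then for every polynomial C ∈ R[t] one has C·γ(C) = γ(C)·C, and every coefficient of C·γ(C) lies in ℝ·1; that is, the norm polynomial ν(C) = C·γ(C) is a real polynomial. -/

import Mathlib

open Polynomial

/-- Coefficientwise application of the involution `star` to a left polynomial. -/
noncomputable def pconj {R : Type*} [Ring R] [StarRing R] (p : Polynomial R) : Polynomial R :=
  ⟨AddMonoidAlgebra.ofCoeff (Finsupp.mapRange star (star_zero R) p.toFinsupp.coeff)⟩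

lemma pconj_coeff {R : Type*} [Ring R] [StarRing R] (p : Polynomial R) (n : ℕ) :
    (pconj p).coeff n = star (p.coeff n) := by
  simp [pconj, Polynomial.coeff, Finsupp.mapRange_apply]

/-- If the involution satisfies `star a * a = a * star a ∈ ℝ·1` for all `a`, then for every
polynomial `F` one has `F · γ(F) = γ(F) · F` and every coefficient of the norm polynomial
`ν(F) = F · γ(F)` lies in `ℝ·1`. -/
theorem norm_polynomial_is_real {R : Type*} [Ring R] [Algebra ℝ R]
    [StarRing R] [StarModule ℝ R]
    (hcomm : ∀ a : R, star a * a = a * star a)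
    (hreal : ∀ a : R, ∃ r : ℝ, star a * a = algebraMap ℝ R r)
    (F : Polynomial R) :
    F * pconj F = pconj F * F ∧
    ∀ i : ℕ, ∃ r : ℝ, (F * pconj F).coeff i = algebraMap ℝ R r := by
  have key2 : ∀ a b : R, star a * b + star b * a = a * star b + b * star a := by
    intro a b
    have h := hcomm (a + b)
    rw [star_add] at h
    have h1 : (star a + star b) * (a + b)
        = star a * a + star b * b + (star a * b + star b * a) := by noncomm_ring
    have h2 : (a + b) * (star a + star b)
        = a * star a + b * star b + (a * star b + b * star a) := by noncomm_ring
    rw [← hcomm a, ← hcomm b] at h2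
    rw [h1, h2] at h
    exact add_left_cancel h
  have key1 : ∀ a b : R, ∃ r : ℝ, star a * b + star b * a = algebraMap ℝ R r := by
    intro a b
    obtain ⟨r, hr⟩ := hreal (a + b)
    obtain ⟨ra, hra⟩ := hreal a
    obtain ⟨rb, hrb⟩ := hreal b
    have h1 : (star a + star b) * (a + b)
        = star a * a + star b * b + (star a * b + star b * a) := by noncomm_ring
    rw [star_add, h1, hra, hrb] at hr
    refine ⟨r - ra - rb, ?_⟩
    rw [map_sub, map_sub, ← hr]
    abel
  have coeff_mul1 : ∀ i : ℕ, (F * pconj F).coeff i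
      = ∑ x ∈ Finset.HasAntidiagonal.antidiagonal i, F.coeff x.1 * star (F.coeff x.2) := by
    intro i
    rw [Polynomial.coeff_mul]
    exact Finset.sum_congr rfl (fun x _ => by rw [pconj_coeff])
  have coeff_mul2 : ∀ i : ℕ, (pconj F * F).coeff i
      = ∑ x ∈ Finset.HasAntidiagonal.antidiagonal i, star (F.coeff x.1) * F.coeff x.2 := by
    intro i
    rw [Polynomial.coeff_mul]
    exact Finset.sum_congr rfl (fun x _ => by rw [pconj_coeff])
  -- double sums
  have double : ∀ i : ℕ,
      (F * pconj F).coeff i + (F * pconj F).coeff i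
      = ∑ x ∈ Finset.HasAntidiagonal.antidiagonal i,
          (star (F.coeff x.1) * F.coeff x.2 + star (F.coeff x.2) * F.coeff x.1) := by
    intro i
    rw [coeff_mul1]
    have hswap : ∑ x ∈ Finset.HasAntidiagonal.antidiagonal i, F.coeff x.1 * star (F.coeff x.2)
        = ∑ x ∈ Finset.HasAntidiagonal.antidiagonal i, F.coeff x.2 * star (F.coeff x.1) := by
      simpa using (Finset.Nat.sum_antidiagonal_swap (n := i)
        (f := fun p => F.coeff p.2 * star (F.coeff p.1)))
    nth_rewrite 2 [hswap]
    rw [← Finset.sum_add_distrib]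
    exact Finset.sum_congr rfl (fun x _ => by
      exact (key2 (F.coeff x.1) (F.coeff x.2)).symm)
  have doubleT : ∀ i : ℕ,
      (pconj F * F).coeff i + (pconj F * F).coeff i
      = ∑ x ∈ Finset.HasAntidiagonal.antidiagonal i,
          (star (F.coeff x.1) * F.coeff x.2 + star (F.coeff x.2) * F.coeff x.1) := by
    intro i
    rw [coeff_mul2]
    have hswap : ∑ x ∈ Finset.HasAntidiagonal.antidiagonal i, star (F.coeff x.1) * F.coeff x.2
        = ∑ x ∈ Finset.HasAntidiagonal.antidiagonal i, star (F.coeff x.2) * F.coeff x.1 := by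
      simpa using (Finset.Nat.sum_antidiagonal_swap (n := i)
        (f := fun p => star (F.coeff p.2) * F.coeff p.1))
    conv_rhs => rw [Finset.sum_add_distrib]
    rw [← hswap]
  constructor
  · ext i
    have h2 : (2 : ℝ) • (F * pconj F).coeff i = (2 : ℝ) • (pconj F * F).coeff i := by
      rw [two_smul, two_smul, double i, doubleT i]
    exact smul_right_injective R (two_ne_zero) h2
  · intro i
    set V : Submodule ℝ R := LinearMap.range (Algebra.linearMap ℝ R) with hV
    have hsum : (F * pconj F).coeff i + (F * pconj F).coeff i ∈ V := by
      rw [double i]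
      refine Submodule.sum_mem V (fun x _ => ?_)
      obtain ⟨r, hr⟩ := key1 (F.coeff x.1) (F.coeff x.2)
      exact ⟨r, hr.symm⟩
    have hmem : (F * pconj F).coeff i ∈ V := by
      have : (F * pconj F).coeff i = (2⁻¹ : ℝ) • ((F * pconj F).coeff i + (F * pconj F).coeff i) := by
        rw [← two_smul ℝ, smul_smul]
        norm_num
      rw [this]
      exact Submodule.smul_mem V _ hsum
    obtain ⟨r, hr⟩ := hmem
    exact ⟨r, hr.symm⟩
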